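/- Let D be an oriented knot diagram with n ≥ 1 crossings, modeled by a Gauss code g, and let D' be the diagram obtained from D by a crossing change at a crossing c₀. Then X_D(t) − t · X_{D'}(t) = (1 − t) · A in ℤ[t]. -/
import Mathlib


open Polynomial Finset

/-- An oriented knot diagram with `n` crossings, modeled by its oriented Gauss code. -/
structure GaussCode (n : ℕ) where
  g : ZMod (2 * n) → Fin n × Bool
  o : Fin n → ZMod (2 * n)
  u : Fin n → ZMod (2 * n)
  over_iff : ∀ (c : Fin n) (e : ZMod (2 * n)), g e = (c, true) ↔ e = o c
  under_iff : ∀ (c : Fin n) (e : ZMod (2 * n)), g e = (c, false) ↔ e = u c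

namespace GaussCode

variable {n : ℕ}

/-- The warping degree of the base position `e`: the number of crossings whose
under-passage occurs strictly before its over-passage when traversing the diagram
starting at `e`. -/
def d (D : GaussCode n) (e : ZMod (2 * n)) : ℕ :=
  (Finset.univ.filter fun c : Fin n => (D.u c - e).val < (D.o c - e).val).card

/-- The warping crossing polynomial. -/
noncomputable def Xpoly (D : GaussCode n) : Polynomial ℤ :=
  ∑ c : Fin n, Polynomial.X ^ D.d (D.o c)

/-- The warping polynomial. -/
noncomputable def Wpoly (D : GaussCode n) : Polynomial ℤ :=
  ∑ k ∈ Finset.range (2 * n), Polynomial.X ^ D.d (k : ZMod (2 * n))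

/-- The warping degree of the diagram: minimum over all base positions. -/
noncomputable def wdeg (D : GaussCode n) : ℕ :=
  sInf (Set.range fun e : ZMod (2 * n) => D.d e)

/-- The diagram is alternating. -/
def Alternating (D : GaussCode n) : Prop :=
  ∀ e : ZMod (2 * n), (D.g e).2 ≠ (D.g (e + 1)).2

end GaussCode

namespace GaussCode

variable {n : ℕ}

lemma val_sub_one {N : ℕ} [NeZero N] {x : ZMod N} (hx : x ≠ 0) : (x - 1).val + 1 = x.val := by
  have h1 : 1 ≤ x.val := Nat.one_le_iff_ne_zero.mpr (fun h => hx (by rwa [ZMod.val_eq_zero] at h))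
  have h2 : x.val < N := ZMod.val_lt x
  have h3 : x - 1 = ((x.val - 1 : ℕ) : ZMod N) := by
    rw [Nat.cast_sub h1, ZMod.natCast_val, ZMod.cast_id]; push_cast; ring
  rw [h3, ZMod.val_cast_of_lt (by omega)]; omega

lemma val_shift {N : ℕ} [NeZero N] {p q e : ZMod N} (hp : p ≠ e) (hq : q ≠ e) :
    ((p - (e+1)).val < (q - (e+1)).val ↔ (p - e).val < (q - e).val) := by
  have hp' : p - e ≠ 0 := sub_ne_zero.mpr hp
  have hq' : q - e ≠ 0 := sub_ne_zero.mpr hq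
  have e1 : p - (e+1) = (p - e) - 1 := by ring
  have e2 : q - (e+1) = (q - e) - 1 := by ring
  rw [e1, e2]
  have t1 := val_sub_one hp'
  have t2 := val_sub_one hq'
  omega


variable (D : GaussCode n)

lemma g_o (c : Fin n) : D.g (D.o c) = (c, true) := (D.over_iff c _).mpr rfl
lemma g_u (c : Fin n) : D.g (D.u c) = (c, false) := (D.under_iff c _).mpr rfl
lemma o_ne_u (c c' : Fin n) : D.o c ≠ D.u c' := by
  intro h
  have h1 := D.g_o c
  rw [h, D.g_u] at h1
  simp at h1
lemma o_injective : Function.Injective D.o := by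
  intro c c' h
  have h1 := D.g_o c
  rw [h, D.g_o] at h1
  simpa using h1.symm
lemma u_injective : Function.Injective D.u := by
  intro c c' h
  have h1 := D.g_u c
  rw [h, D.g_u] at h1
  simpa using h1.symm

lemma step_over [NeZero (2*n)] {e : ZMod (2*n)} {c : Fin n} (h : D.g e = (c, true)) :
    D.d (e+1) = D.d e + 1 := by
  have hN : 2*n ≠ 0 := NeZero.ne _
  have he : e = D.o c := (D.over_iff c e).mp h
  subst he
  unfold d
  have key : (univ.filter fun c' : Fin n =>
        (D.u c' - (D.o c + 1)).val < (D.o c' - (D.o c + 1)).val)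
      = insert c (univ.filter fun c' : Fin n => (D.u c' - D.o c).val < (D.o c' - D.o c).val) := by
    ext c'
    simp only [mem_insert, mem_filter, mem_univ, true_and]
    by_cases hc : c' = c
    · subst hc
      have hu : D.u c' - D.o c' ≠ 0 := sub_ne_zero.mpr (fun h => (D.o_ne_u c' c') h.symm)
      have h1 : (D.u c' - (D.o c' + 1)).val + 1 = (D.u c' - D.o c').val := by
        have hx : D.u c' - (D.o c' + 1) = (D.u c' - D.o c') - 1 := by ring
        rw [hx]; exact val_sub_one hu
      have h2 : D.o c' - (D.o c' + 1) = -1 := by ring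
      have h3 : ((-1 : ZMod (2*n))).val = 2*n - 1 := by
        rw [ZMod.neg_val]
        have h10 : (1 : ZMod (2*n)).val = 1 := by rw [ZMod.val_one_eq_one_mod]; exact Nat.mod_eq_of_lt (by omega)
        have : (1 : ZMod (2*n)) ≠ 0 := by
          intro hh
          rw [← ZMod.val_eq_zero, h10] at hh
          omega
        rw [if_neg this, h10]
      have h4 : (D.u c' - D.o c').val < 2*n := ZMod.val_lt _
      have h5 : 1 ≤ (D.u c' - D.o c').val :=
        Nat.one_le_iff_ne_zero.mpr (fun hh => hu (by rwa [ZMod.val_eq_zero] at hh))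
      rw [h2, h3]
      simp only [true_or, iff_true]
      omega
    · have h1 : D.u c' ≠ D.o c := fun hh => (D.o_ne_u c c') hh.symm
      have h2 : D.o c' ≠ D.o c := fun hh => hc (D.o_injective hh)
      rw [val_shift h1 h2]
      simp [hc]
  rw [key, card_insert_of_notMem (by simp)]

lemma step_under [NeZero (2*n)] {e : ZMod (2*n)} {c : Fin n} (h : D.g e = (c, false)) :
    D.d e = D.d (e+1) + 1 := by
  have hN : 2*n ≠ 0 := NeZero.ne _
  have he : e = D.u c := (D.under_iff c e).mp h
  subst he
  unfold d
  have key : (univ.filter fun c' : Fin n => (D.u c' - D.u c).val < (D.o c' - D.u c).val)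
      = insert c (univ.filter fun c' : Fin n =>
        (D.u c' - (D.u c + 1)).val < (D.o c' - (D.u c + 1)).val) := by
    ext c'
    simp only [mem_insert, mem_filter, mem_univ, true_and]
    by_cases hc : c' = c
    · subst hc
      have ho : D.o c' - D.u c' ≠ 0 := sub_ne_zero.mpr (D.o_ne_u c' c')
      have h5 : 1 ≤ (D.o c' - D.u c').val :=
        Nat.one_le_iff_ne_zero.mpr (fun hh => ho (by rwa [ZMod.val_eq_zero] at hh))
      constructor
      · intro _; exact Or.inl rfl
      · intro _
        simp only [sub_self, ZMod.val_zero]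
        omega
    · have h1 : D.u c' ≠ D.u c := fun hh => hc (D.u_injective hh)
      have h2 : D.o c' ≠ D.u c := D.o_ne_u c' c
      rw [val_shift h1 h2]
      simp [hc]
  rw [key, card_insert_of_notMem]
  simp only [mem_filter, mem_univ, true_and, not_lt]
  have hu : D.u c - (D.u c + 1) = -1 := by ring
  have ho' : D.o c - (D.u c + 1) = (D.o c - D.u c) - 1 := by ring
  have hone : D.o c - D.u c ≠ 0 := sub_ne_zero.mpr (D.o_ne_u c c)
  have h1 : (D.o c - (D.u c + 1)).val + 1 = (D.o c - D.u c).val := by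
    rw [ho']; exact val_sub_one hone
  have h3 : ((-1 : ZMod (2*n))).val = 2*n - 1 := by
    rw [ZMod.neg_val]
    have h10 : (1 : ZMod (2*n)).val = 1 := by rw [ZMod.val_one_eq_one_mod]; exact Nat.mod_eq_of_lt (by omega)
    have : (1 : ZMod (2*n)) ≠ 0 := by
      intro hh; rw [← ZMod.val_eq_zero, h10] at hh; omega
    rw [if_neg this, h10]
  rw [hu, h3]
  have h4 : (D.o c - D.u c).val < 2*n := ZMod.val_lt _
  omega

lemma val_pos_of_ne {N : ℕ} [NeZero N] {x : ZMod N} (hx : x ≠ 0) : 1 ≤ x.val :=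
  Nat.one_le_iff_ne_zero.mpr (fun h => hx (by rwa [ZMod.val_eq_zero] at h))

lemma d_change_in [NeZero (2*n)] (D D' : GaussCode n) (c₀ : Fin n)
    (ho₀ : D'.o c₀ = D.u c₀) (hu₀ : D'.u c₀ = D.o c₀)
    (ho : ∀ c, c ≠ c₀ → D'.o c = D.o c) (hu : ∀ c, c ≠ c₀ → D'.u c = D.u c)
    {e : ZMod (2*n)} (hS : (D.o c₀ - e).val < (D.u c₀ - e).val) :
    D'.d e = D.d e + 1 := by
  unfold d
  have key : (univ.filter fun c : Fin n => (D'.u c - e).val < (D'.o c - e).val)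
      = insert c₀ (univ.filter fun c : Fin n => (D.u c - e).val < (D.o c - e).val) := by
    ext c
    simp only [mem_insert, mem_filter, mem_univ, true_and]
    by_cases hc : c = c₀
    · subst hc
      rw [ho₀, hu₀]
      simp only [true_or, iff_true]
      exact hS
    · rw [ho c hc, hu c hc]
      simp [hc]
  rw [key, card_insert_of_notMem]
  simp only [mem_filter, mem_univ, true_and, not_lt]
  omega

lemma d_change_out [NeZero (2*n)] (D D' : GaussCode n) (c₀ : Fin n)
    (ho₀ : D'.o c₀ = D.u c₀) (hu₀ : D'.u c₀ = D.o c₀)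
    (ho : ∀ c, c ≠ c₀ → D'.o c = D.o c) (hu : ∀ c, c ≠ c₀ → D'.u c = D.u c)
    {e : ZMod (2*n)} (hS : ¬ (D.o c₀ - e).val < (D.u c₀ - e).val) :
    D.d e = D'.d e + 1 := by
  unfold d
  have hne : (D.u c₀ - e).val ≠ (D.o c₀ - e).val := by
    intro h
    have : D.u c₀ - e = D.o c₀ - e := ZMod.val_injective _ h
    have h2 : D.o c₀ = D.u c₀ := by linear_combination -this
    exact (D.o_ne_u c₀ c₀) h2
  have key : (univ.filter fun c : Fin n => (D.u c - e).val < (D.o c - e).val)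
      = insert c₀ (univ.filter fun c : Fin n => (D'.u c - e).val < (D'.o c - e).val) := by
    ext c
    simp only [mem_insert, mem_filter, mem_univ, true_and]
    by_cases hc : c = c₀
    · subst hc
      simp only [true_or, iff_true]
      omega
    · rw [ho c hc, hu c hc]
      simp [hc]
  rw [key, card_insert_of_notMem]
  simp only [mem_filter, mem_univ, true_and, not_lt, ho₀, hu₀]
  omega

lemma mem_S_iff [NeZero (2*n)] (D : GaussCode n) (c₀ : Fin n) (e : ZMod (2*n)) :
    ((D.o c₀ - e).val < (D.u c₀ - e).val) ↔
      (1 ≤ (e - D.u c₀).val ∧ (e - D.u c₀).val ≤ (D.o c₀ - D.u c₀).val) := by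
  have hN : 2*n ≠ 0 := NeZero.ne _
  have hou : D.o c₀ - D.u c₀ ≠ 0 := sub_ne_zero.mpr (D.o_ne_u c₀ c₀)
  have ham : (e - D.u c₀).val < 2*n := ZMod.val_lt _
  have hmm : (D.o c₀ - D.u c₀).val < 2*n := ZMod.val_lt _
  have hm0 : 1 ≤ (D.o c₀ - D.u c₀).val := val_pos_of_ne hou
  have hcast : ∀ x : ZMod (2*n), ((x.val : ℕ) : ZMod (2*n)) = x := fun x => by
    rw [ZMod.natCast_val, ZMod.cast_id]
  have hue : D.u c₀ - e = -(e - D.u c₀) := by ring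
  have h1 : (D.u c₀ - e).val = if e - D.u c₀ = 0 then 0 else 2*n - (e - D.u c₀).val := by
    rw [hue, ZMod.neg_val]
  have hoe : D.o c₀ - e = (D.o c₀ - D.u c₀) - (e - D.u c₀) := by ring
  by_cases h0 : e - D.u c₀ = 0
  · have ha0 : (e - D.u c₀).val = 0 := by rw [h0, ZMod.val_zero]
    rw [h1, if_pos h0]
    omega
  · have ha0 : 1 ≤ (e - D.u c₀).val := val_pos_of_ne h0
    rw [h1, if_neg h0]
    by_cases ham2 : (e - D.u c₀).val ≤ (D.o c₀ - D.u c₀).val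
    · have he2 : D.o c₀ - e = (((D.o c₀ - D.u c₀).val - (e - D.u c₀).val : ℕ) : ZMod (2*n)) := by
        rw [hoe, Nat.cast_sub ham2, hcast, hcast]
      rw [he2, ZMod.val_cast_of_lt (by omega)]
      omega
    · have he2 : D.o c₀ - e
          = ((2*n + (D.o c₀ - D.u c₀).val - (e - D.u c₀).val : ℕ) : ZMod (2*n)) := by
        rw [hoe]
        have : ((2*n + (D.o c₀ - D.u c₀).val - (e - D.u c₀).val : ℕ) : ZMod (2*n))
            = ((2*n : ℕ) : ZMod (2*n)) + (((D.o c₀ - D.u c₀).val : ℕ) : ZMod (2*n))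
              - (((e - D.u c₀).val : ℕ) : ZMod (2*n)) := by
          rw [Nat.cast_sub (by omega), Nat.cast_add]
        rw [this, ZMod.natCast_self, hcast, hcast]
        ring
      rw [he2, ZMod.val_cast_of_lt (by omega)]
      omega

lemma sum_positions [NeZero (2*n)] (D : GaussCode n) {M : Type*} [AddCommMonoid M]
    (f : ZMod (2*n) → M) :
    ∑ e : ZMod (2*n), f e = ∑ c : Fin n, f (D.o c) + ∑ c : Fin n, f (D.u c) := by
  have hbij : Function.Bijective (fun p : Fin n × Bool => if p.2 then D.o p.1 else D.u p.1) := by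
    rw [Fintype.bijective_iff_injective_and_card]
    constructor
    · rintro ⟨c, b⟩ ⟨c', b'⟩ h
      cases b <;> cases b' <;> simp only [if_true, if_false] at h
      · rw [D.u_injective h]
      · exact absurd h.symm (D.o_ne_u c' c)
      · exact absurd h (D.o_ne_u c c')
      · rw [D.o_injective h]
    · simp [ZMod.card]
      ring
  rw [← Fintype.sum_bijective _ hbij (fun p => f (if p.2 then D.o p.1 else D.u p.1)) f
      (fun p => rfl)]
  rw [Fintype.sum_prod_type]
  rw [Finset.sum_add_distrib.symm]
  congr 1
  ext c
  simp [Fintype.sum_bool]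


end GaussCode

/-- Crossing change formula: `X_D(t) − t⬝X_{D'}(t) = (1 − t)⬝A`, where `A` is the sum of
`t^(d e)` over the edges from the under-crossing of `c₀` to the over-crossing of `c₀`. -/
theorem crossing_change_A
    (n : ℕ) (hn : 1 ≤ n) (D D' : GaussCode n) (c₀ : Fin n)
    (h1 : D'.g (D.o c₀) = (c₀, false))
    (h2 : D'.g (D.u c₀) = (c₀, true))
    (h3 : ∀ e : ZMod (2 * n), e ≠ D.o c₀ → e ≠ D.u c₀ → D'.g e = D.g e) :
    D.Xpoly - Polynomial.X * D'.Xpoly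
      = (1 - Polynomial.X) *
          ∑ k ∈ Finset.range (2 * n),
            if (D.o c₀ - (k : ZMod (2 * n))).val < (D.u c₀ - (k : ZMod (2 * n))).val
            then (Polynomial.X : Polynomial ℤ) ^ D.d (k : ZMod (2 * n)) else 0 := by
  haveI : NeZero (2 * n) := ⟨by omega⟩
  have hcast : ∀ x : ZMod (2*n), ((x.val : ℕ) : ZMod (2*n)) = x := fun x => by
    rw [ZMod.natCast_val, ZMod.cast_id]
  -- structure of D'
  have ho₀ : D'.o c₀ = D.u c₀ := ((D'.over_iff c₀ _).mp h2).symm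
  have hu₀ : D'.u c₀ = D.o c₀ := ((D'.under_iff c₀ _).mp h1).symm
  have ho : ∀ c, c ≠ c₀ → D'.o c = D.o c := by
    intro c hc
    have h4 : D'.g (D.o c) = (c, true) := by
      rw [h3 _ (fun h => hc (D.o_injective h)) (D.o_ne_u c c₀)]
      exact D.g_o c
    exact ((D'.over_iff c _).mp h4).symm
  have hu : ∀ c, c ≠ c₀ → D'.u c = D.u c := by
    intro c hc
    have h4 : D'.g (D.u c) = (c, false) := by
      rw [h3 _ (fun h => (D.o_ne_u c₀ c) h.symm) (fun h => hc (D.u_injective h))]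
      exact D.g_u c
    exact ((D'.under_iff c _).mp h4).symm
  have hO : ∀ c, D.d (D.o c + 1) = D.d (D.o c) + 1 := fun c => D.step_over (D.g_o c)
  have hU : ∀ c, D.d (D.u c) = D.d (D.u c + 1) + 1 := fun c => D.step_under (D.g_u c)
  -- rewrite the range-sum as a sum over ZMod
  have hAr : (∑ k ∈ Finset.range (2 * n),
        if (D.o c₀ - (k : ZMod (2 * n))).val < (D.u c₀ - (k : ZMod (2 * n))).val
        then (Polynomial.X : Polynomial ℤ) ^ D.d (k : ZMod (2 * n)) else 0)
      = ∑ e : ZMod (2*n),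
        if (D.o c₀ - e).val < (D.u c₀ - e).val
        then (Polynomial.X : Polynomial ℤ) ^ D.d e else 0 := by
    apply Finset.sum_nbij' (fun k => ((k : ℕ) : ZMod (2*n))) (fun e => e.val)
    · intro a _; exact mem_univ _
    · intro e _; simpa using ZMod.val_lt e
    · intro a ha
      simp only [Finset.mem_range] at ha
      exact ZMod.val_cast_of_lt ha
    · intro e _; exact hcast e
    · intro a _; rfl
  -- telescoping
  have htel0 : (∑ e : ZMod (2*n),
        if (D.o c₀ - e).val < (D.u c₀ - e).val
        then ((Polynomial.X : Polynomial ℤ) ^ D.d e - Polynomial.X ^ D.d (e+1)) else 0)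
      = Polynomial.X ^ D.d (D.u c₀ + 1) - Polynomial.X ^ D.d (D.o c₀ + 1) := by
    rw [← Finset.sum_filter]
    have key : (∑ e ∈ univ.filter (fun e : ZMod (2*n) =>
          (D.o c₀ - e).val < (D.u c₀ - e).val),
          ((Polynomial.X : Polynomial ℤ) ^ D.d e - Polynomial.X ^ D.d (e+1)))
        = ∑ j ∈ Finset.range ((D.o c₀ - D.u c₀).val),
          ((Polynomial.X : Polynomial ℤ) ^ D.d (D.u c₀ + 1 + ((j : ℕ) : ZMod (2*n)))
            - Polynomial.X ^ D.d (D.u c₀ + 1 + (((j+1 : ℕ)) : ZMod (2*n)))) := by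
      apply Finset.sum_nbij' (fun e => (e - D.u c₀).val - 1)
        (fun j => D.u c₀ + 1 + ((j : ℕ) : ZMod (2*n)))
      · intro e he
        simp only [Finset.mem_filter, Finset.mem_univ, true_and] at he
        rw [D.mem_S_iff c₀ e] at he
        simp only [Finset.mem_range]
        omega
      · intro j hj
        simp only [Finset.mem_range] at hj
        have hmlt : (D.o c₀ - D.u c₀).val < 2*n := ZMod.val_lt _
        simp only [Finset.mem_filter, Finset.mem_univ, true_and]
        rw [D.mem_S_iff c₀]
        have hv : (D.u c₀ + 1 + ((j : ℕ) : ZMod (2*n)) - D.u c₀) = (((j+1 : ℕ)) : ZMod (2*n)) := by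
          push_cast; ring
        rw [hv, ZMod.val_cast_of_lt (by omega)]
        omega
      · intro e he
        simp only [Finset.mem_filter, Finset.mem_univ, true_and] at he
        rw [D.mem_S_iff c₀ e] at he
        have hv : ((((e - D.u c₀).val - 1 : ℕ)) : ZMod (2*n))
            = ((e - D.u c₀).val : ℕ) - 1 := by
          rw [Nat.cast_sub he.1]
          push_cast; ring
        rw [hv, hcast]
        ring
      · intro j hj
        simp only [Finset.mem_range] at hj
        have hmlt : (D.o c₀ - D.u c₀).val < 2*n := ZMod.val_lt _
        have hv : (D.u c₀ + 1 + ((j : ℕ) : ZMod (2*n)) - D.u c₀) = (((j+1 : ℕ)) : ZMod (2*n)) := by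
          push_cast; ring
        rw [hv, ZMod.val_cast_of_lt (by omega)]
        omega
      · intro e he
        simp only [Finset.mem_filter, Finset.mem_univ, true_and] at he
        rw [D.mem_S_iff c₀ e] at he
        have hv1 : D.u c₀ + 1 + ((((e - D.u c₀).val - 1 : ℕ)) : ZMod (2*n)) = e := by
          rw [Nat.cast_sub he.1]
          push_cast
          rw [hcast]
          ring
        have hv2 : D.u c₀ + 1 + (((((e - D.u c₀).val - 1) + 1 : ℕ)) : ZMod (2*n)) = e + 1 := by
          have : ((e - D.u c₀).val - 1) + 1 = (e - D.u c₀).val := by omega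
          rw [this, hcast]
          ring
        rw [hv1, hv2]
    rw [key, Finset.sum_range_sub' (fun j =>
      (Polynomial.X : Polynomial ℤ) ^ D.d (D.u c₀ + 1 + ((j : ℕ) : ZMod (2*n))))]
    have e1 : D.u c₀ + 1 + (((0 : ℕ)) : ZMod (2*n)) = D.u c₀ + 1 := by push_cast; ring
    have e2 : D.u c₀ + 1 + ((((D.o c₀ - D.u c₀).val : ℕ)) : ZMod (2*n)) = D.o c₀ + 1 := by
      rw [hcast]; ring
    rw [e1, e2]
  have hEsum : (∑ e : ZMod (2*n),
        if (D.o c₀ - e).val < (D.u c₀ - e).val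
        then (Polynomial.X : Polynomial ℤ) ^ D.d e else 0)
      = (∑ c : Fin n, if (D.o c₀ - D.o c).val < (D.u c₀ - D.o c).val
          then (Polynomial.X : Polynomial ℤ) ^ D.d (D.o c) else 0)
        + Polynomial.X * (∑ c : Fin n, if (D.o c₀ - D.u c).val < (D.u c₀ - D.u c).val
          then (Polynomial.X : Polynomial ℤ) ^ D.d (D.u c + 1) else 0) := by
    rw [D.sum_positions]
    congr 1
    rw [Finset.mul_sum]
    apply Finset.sum_congr rfl
    intro c _
    rw [hU c]
    split_ifs with h
    · ring
    · ring
  have htel' : (1 - Polynomial.X) * (∑ c : Fin n, if (D.o c₀ - D.o c).val < (D.u c₀ - D.o c).val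
          then (Polynomial.X : Polynomial ℤ) ^ D.d (D.o c) else 0)
      + (Polynomial.X - 1) * (∑ c : Fin n, if (D.o c₀ - D.u c).val < (D.u c₀ - D.u c).val
          then (Polynomial.X : Polynomial ℤ) ^ D.d (D.u c + 1) else 0)
      = Polynomial.X ^ D.d (D.u c₀ + 1) - Polynomial.X ^ (D.d (D.o c₀) + 1) := by
    rw [D.sum_positions] at htel0
    have e1 : (∑ c : Fin n, if (D.o c₀ - D.o c).val < (D.u c₀ - D.o c).val
          then ((Polynomial.X : Polynomial ℤ) ^ D.d (D.o c) - Polynomial.X ^ D.d (D.o c + 1)) else 0)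
        = (1 - Polynomial.X) * (∑ c : Fin n, if (D.o c₀ - D.o c).val < (D.u c₀ - D.o c).val
          then (Polynomial.X : Polynomial ℤ) ^ D.d (D.o c) else 0) := by
      rw [Finset.mul_sum]
      apply Finset.sum_congr rfl
      intro c _
      rw [hO c]
      split_ifs with h <;> ring
    have e2 : (∑ c : Fin n, if (D.o c₀ - D.u c).val < (D.u c₀ - D.u c).val
          then ((Polynomial.X : Polynomial ℤ) ^ D.d (D.u c) - Polynomial.X ^ D.d (D.u c + 1)) else 0)
        = (Polynomial.X - 1) * (∑ c : Fin n, if (D.o c₀ - D.u c).val < (D.u c₀ - D.u c).val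
          then (Polynomial.X : Polynomial ℤ) ^ D.d (D.u c + 1) else 0) := by
      rw [Finset.mul_sum]
      apply Finset.sum_congr rfl
      intro c _
      rw [hU c]
      split_ifs with h <;> ring
    rw [e1, e2, hO c₀] at htel0
    exact htel0
  have hc₀term : D'.d (D'.o c₀) = D.d (D.u c₀ + 1) := by
    have h5 : ¬ (D.o c₀ - D.u c₀).val < (D.u c₀ - D.u c₀).val := by simp
    have h6 := GaussCode.d_change_out D D' c₀ ho₀ hu₀ ho hu h5
    have h7 := hU c₀
    rw [ho₀]
    omega
  have hstep2 : ∀ c ∈ Finset.univ.erase c₀,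
      Polynomial.X * (Polynomial.X : Polynomial ℤ) ^ D'.d (D'.o c)
      = (if (D.o c₀ - D.o c).val < (D.u c₀ - D.o c).val
          then (Polynomial.X : Polynomial ℤ) ^ (D.d (D.o c) + 2) else Polynomial.X ^ D.d (D.o c)) := by
    intro c hc
    have hcc : c ≠ c₀ := Finset.ne_of_mem_erase hc
    rw [ho c hcc]
    by_cases hs : (D.o c₀ - D.o c).val < (D.u c₀ - D.o c).val
    · rw [if_pos hs, GaussCode.d_change_in D D' c₀ ho₀ hu₀ ho hu hs]
      ring
    · rw [if_neg hs]
      have h6 := GaussCode.d_change_out D D' c₀ ho₀ hu₀ ho hu hs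
      rw [h6, pow_succ]
      ring
  have hSo : (D.o c₀ - D.o c₀).val < (D.u c₀ - D.o c₀).val := by
    simp only [sub_self, ZMod.val_zero]
    exact GaussCode.val_pos_of_ne (sub_ne_zero.mpr (fun h => (D.o_ne_u c₀ c₀) h.symm))
  have hErase : Polynomial.X * ∑ c ∈ Finset.univ.erase c₀, (Polynomial.X : Polynomial ℤ) ^ D'.d (D'.o c)
      = (∑ c : Fin n, (Polynomial.X : Polynomial ℤ) ^ D.d (D.o c))
        + (Polynomial.X^2 - 1) * (∑ c : Fin n, if (D.o c₀ - D.o c).val < (D.u c₀ - D.o c).val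
            then (Polynomial.X : Polynomial ℤ) ^ D.d (D.o c) else 0)
        - Polynomial.X ^ (D.d (D.o c₀) + 2) := by
    rw [Finset.mul_sum, Finset.sum_congr rfl hstep2]
    have h9 : (∑ c ∈ Finset.univ.erase c₀,
          (if (D.o c₀ - D.o c).val < (D.u c₀ - D.o c).val
            then (Polynomial.X : Polynomial ℤ) ^ (D.d (D.o c) + 2) else Polynomial.X ^ D.d (D.o c)))
        = (∑ c : Fin n,
          (if (D.o c₀ - D.o c).val < (D.u c₀ - D.o c).val
            then (Polynomial.X : Polynomial ℤ) ^ (D.d (D.o c) + 2) else Polynomial.X ^ D.d (D.o c)))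
          - Polynomial.X ^ (D.d (D.o c₀) + 2) := by
      rw [← Finset.add_sum_erase _ _ (Finset.mem_univ c₀), if_pos hSo]
      ring
    rw [h9]
    have h8 : (∑ c : Fin n,
          (if (D.o c₀ - D.o c).val < (D.u c₀ - D.o c).val
            then (Polynomial.X : Polynomial ℤ) ^ (D.d (D.o c) + 2) else Polynomial.X ^ D.d (D.o c)))
        = (∑ c : Fin n, (Polynomial.X : Polynomial ℤ) ^ D.d (D.o c))
          + (Polynomial.X^2 - 1) * (∑ c : Fin n, if (D.o c₀ - D.o c).val < (D.u c₀ - D.o c).val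
            then (Polynomial.X : Polynomial ℤ) ^ D.d (D.o c) else 0) := by
      rw [Finset.mul_sum, ← Finset.sum_add_distrib]
      apply Finset.sum_congr rfl
      intro c _
      split_ifs with h <;> ring
    rw [h8]
  unfold GaussCode.Xpoly
  rw [hAr, hEsum]
  rw [← Finset.add_sum_erase _ (fun c => (Polynomial.X : Polynomial ℤ) ^ D'.d (D'.o c)) (Finset.mem_univ c₀)]
  rw [hc₀term]
  linear_combination (-1 : Polynomial ℤ) * hErase + Polynomial.X * htel'
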